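/- The standard middle-thirds Cantor set in the real line (viewed as a subset of the complex plane) is uniformly perfect: there exists a constant 0 < k < 1 such that for every point x of the Cantor set and every radius r smaller than the diameter of the Cantor set, the closed annulus {z : k·r ≤ |z − x| ≤ r} intersects the Cantor set. -/

import Mathlib

open Metric Set

/-- The standard middle-thirds Cantor set: reals with a ternary expansion
avoiding the digit 1 (equivalently, using only digits 0 and 2). -/
def middleThirdsCantor : Set ℝ :=
  {x | ∃ a : ℕ → ℕ, (∀ n, a n = 0 ∨ a n = 2) ∧ x = ∑' n, (a n : ℝ) / 3 ^ (n + 1)}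

/-- The Cantor set, viewed as a subset of the complex plane. -/
def cantorSetC : Set ℂ := Complex.ofReal '' middleThirdsCantor

lemma summable_two_div : Summable (fun n : ℕ => (2:ℝ) / 3 ^ (n + 1)) := by
  have h : (fun n : ℕ => (2:ℝ) / 3 ^ (n + 1)) = fun n : ℕ => (2/3) * (1/3) ^ n := by
    funext n
    rw [pow_succ]
    field_simp
    rw [← mul_pow]; norm_num
  rw [h]
  exact (summable_geometric_of_lt_one (by norm_num) (by norm_num)).mul_left _

lemma tsum_two_div : ∑' n : ℕ, (2:ℝ) / 3 ^ (n + 1) = 1 := by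
  have h : (fun n : ℕ => (2:ℝ) / 3 ^ (n + 1)) = fun n : ℕ => (2/3) * (1/3) ^ n := by
    funext n
    rw [pow_succ]
    field_simp
    rw [← mul_pow]; norm_num
  rw [h, tsum_mul_left, tsum_geometric_of_lt_one (by norm_num) (by norm_num)]
  norm_num

lemma summable_digits (a : ℕ → ℕ) (h : ∀ n, a n ≤ 2) :
    Summable (fun n : ℕ => (a n : ℝ) / 3 ^ (n + 1)) := by
  refine Summable.of_nonneg_of_le (fun n => by positivity) (fun n => ?_) summable_two_div
  gcongr
  exact_mod_cast h n

lemma digits_le (a : ℕ → ℕ) (h : ∀ n, a n = 0 ∨ a n = 2) : ∀ n, a n ≤ 2 := by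
  intro n; rcases h n with h' | h' <;> omega

lemma mem_Icc_of_mem {x : ℝ} (hx : x ∈ middleThirdsCantor) : x ∈ Icc (0:ℝ) 1 := by
  obtain ⟨a, ha, rfl⟩ := hx
  constructor
  · exact tsum_nonneg (fun n => by positivity)
  · calc ∑' n : ℕ, (a n : ℝ) / 3 ^ (n + 1) ≤ ∑' n : ℕ, (2:ℝ) / 3 ^ (n + 1) := by
          refine Summable.tsum_le_tsum (fun n => ?_) (summable_digits a (digits_le a ha)) summable_two_div
          gcongr
          exact_mod_cast digits_le a ha n
      _ = 1 := tsum_two_div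

lemma diam_le : Metric.diam cantorSetC ≤ 1 := by
  apply Metric.diam_le_of_forall_dist_le (by norm_num)
  rintro x ⟨u, hu, rfl⟩ y ⟨v, hv, rfl⟩
  have hu' := mem_Icc_of_mem hu
  have hv' := mem_Icc_of_mem hv
  have : dist (u:ℂ) (v:ℂ) = |u - v| := by
    rw [Complex.dist_eq, ← Complex.ofReal_sub, Complex.norm_real, Real.norm_eq_abs]
  rw [this, abs_sub_le_iff]
  constructor <;> [skip; skip] <;> simp only [Icc, mem_setOf_eq] at hu' hv' <;> linarith [hu'.1, hu'.2, hv'.1, hv'.2]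

theorem cantorSet_uniformly_perfect :
    ∃ k : ℝ, 0 < k ∧ k < 1 ∧
      ∀ x ∈ cantorSetC, ∀ r : ℝ, 0 < r → r < Metric.diam cantorSetC →
        ({z : ℂ | k * r ≤ dist z x ∧ dist z x ≤ r} ∩ cantorSetC).Nonempty := by
  classical
  refine ⟨1/3, by norm_num, by norm_num, ?_⟩
  rintro x ⟨x₀, ⟨a, ha, rfl⟩, rfl⟩ r hr hrd
  have hr1 : r < 1 := lt_of_lt_of_le hrd diam_le
  -- find the least n with 2/3^(n+1) ≤ r
  have hex : ∃ n : ℕ, (2:ℝ) / 3 ^ (n + 1) ≤ r := by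
    obtain ⟨m, hm⟩ := exists_pow_lt_of_lt_one (by positivity : (0:ℝ) < r / 2) (by norm_num : (1:ℝ)/3 < 1)
    refine ⟨m, ?_⟩
    have h3 : ((1:ℝ)/3) ^ m = 1 / 3 ^ m := by rw [div_pow]; norm_num
    rw [h3] at hm
    have : (2:ℝ) / 3 ^ (m + 1) ≤ 2 / 3 ^ m := by gcongr <;> norm_num
    have h2 : (2:ℝ) / 3 ^ m < r := by
      rw [div_lt_iff₀ (by positivity)] at hm ⊢
      linarith
    linarith
  set n := Nat.find hex with hn_def
  have hn : (2:ℝ) / 3 ^ (n + 1) ≤ r := Nat.find_spec hex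
  have hlt : r < 2 / 3 ^ n := by
    rcases Nat.eq_zero_or_pos n with h0 | hpos
    · rw [h0]; norm_num; linarith
    · have hm := Nat.find_min hex (show n - 1 < n from by omega)
      push_neg at hm
      have he : n - 1 + 1 = n := by omega
      rw [he] at hm
      exact hm
  -- flip the n-th digit
  set b : ℕ → ℕ := fun m => if m = n then 2 - a m else a m with hb_def
  have hb : ∀ m, b m = 0 ∨ b m = 2 := by
    intro m
    simp only [hb_def]
    split
    · rcases ha m with h' | h' <;> omega
    · exact ha m
  set y := ∑' m : ℕ, (b m : ℝ) / 3 ^ (m + 1) with hy_def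
  have hsa := summable_digits a (digits_le a ha)
  have hsb := summable_digits b (digits_le b hb)
  have hdiff : y - (∑' m : ℕ, (a m : ℝ) / 3 ^ (m + 1)) =
      ((b n : ℝ) - a n) / 3 ^ (n + 1) := by
    rw [hy_def, ← Summable.tsum_sub hsb hsa]
    rw [tsum_eq_single n]
    · ring
    · intro m hm
      simp [hb_def, hm]
  have habs : |y - (∑' m : ℕ, (a m : ℝ) / 3 ^ (m + 1))| = 2 / 3 ^ (n + 1) := by
    rw [hdiff]
    rcases ha n with h' | h' <;> simp [hb_def, h', abs_div, abs_of_nonneg]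
  refine ⟨(y:ℂ), ⟨?_, ?_⟩, ⟨y, ⟨b, hb, rfl⟩, rfl⟩⟩
  all_goals
    have hdc : dist (y:ℂ) ((∑' m : ℕ, (a m : ℝ) / 3 ^ (m + 1) : ℝ) : ℂ) = 2 / 3 ^ (n + 1) := by
      rw [Complex.dist_eq, ← Complex.ofReal_sub, Complex.norm_real, Real.norm_eq_abs]
      exact habs
  · rw [hdc]
    have : (1:ℝ)/3 * r < 1/3 * (2 / 3 ^ n) := by linarith
    have h3 : (1:ℝ)/3 * (2 / 3 ^ n) = 2 / 3 ^ (n + 1) := by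
      rw [pow_succ]; ring
    linarith
  · rw [hdc]; exact hn
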